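/- Let k ≤ n be positive integers, let λ > 0, m > 0, let C > 0 be a real number with n/C ≤ 1, and let μ ≥ 0. For each i ∈ {1, …, k}, let T_i = t_t^{(i)} + ∑_{j=1}^{S_i} η_j^{(i)}, where t_t^{(i)} has the shifted exponential distribution SExp(m/k, λ), S_i is geometric with parameter p_i = (n−i+1)/C, the η_j^{(i)} are i.i.d. nonnegative integrable random variables with mean μ independent of S_i, and all summands are integrable. Then E[∑_{i=1}^{k} T_i] = k/λ + m + C·μ·(H_n − H_{n−k}). -/

import Mathlib

open MeasureTheory ProbabilityTheory

/-- The shifted exponential distribution `SExp(Δ, λ)`: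
    density `λ e^{-λ(x-Δ)}` for `x ≥ Δ` and `0` otherwise. -/
noncomputable def sexp (Δ lam : ℝ) : Measure ℝ :=
  volume.withDensity fun x =>
    ENNReal.ofReal (if Δ ≤ x then lam * Real.exp (-lam * (x - Δ)) else 0)

/-- Harmonic number `H_j = ∑_{i=1}^j 1/i`, as a real number. -/
noncomputable def H (j : ℕ) : ℝ := (harmonic j : ℝ)

open scoped NNReal ENNReal

open scoped NNReal ENNReal

lemma sexp_mean {Δ lam : ℝ} (hΔ : 0 ≤ Δ) (hlam : 0 < lam) :
    ∫ x, x ∂(sexp Δ lam) = Δ + 1 / lam := by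
  set g : ℝ → ℝ := fun x => if Δ ≤ x then lam * Real.exp (-lam * (x - Δ)) else 0 with hgdef
  have hg : ∀ x, 0 ≤ g x := by
    intro x
    by_cases h : Δ ≤ x
    · simp only [hgdef, if_pos h]
      positivity
    · simp [hgdef, h]
  have hgmeas : Measurable g :=
    Measurable.ite measurableSet_Ici (by fun_prop) measurable_const
  have hden : sexp Δ lam
      = volume.withDensity (fun x => (((g x).toNNReal : ℝ≥0) : ℝ≥0∞)) := by
    simp only [sexp, ENNReal.ofReal]
    rfl
  rw [hden, integral_withDensity_eq_integral_smul (hgmeas.real_toNNReal)]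
  have h1 : ∀ x : ℝ, (g x).toNNReal • x = Set.indicator (Set.Ici Δ)
      (fun x => lam * Real.exp (-lam * (x - Δ)) * x) x := by
    intro x
    rw [NNReal.smul_def, smul_eq_mul, Real.coe_toNNReal _ (hg x), Set.indicator_apply]
    by_cases h : Δ ≤ x <;> simp [hgdef, h, Set.mem_Ici]
  rw [show (fun x => (g x).toNNReal • x) = _ from funext h1, integral_indicator measurableSet_Ici,
    integral_Ici_eq_integral_Ioi]
  -- antiderivative
  set F : ℝ → ℝ := fun x => -(x + 1 / lam) * Real.exp (-lam * (x - Δ)) with hFdef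
  have hderiv : ∀ x ∈ Set.Ici Δ, HasDerivAt F (lam * Real.exp (-lam * (x - Δ)) * x) x := by
    intro x _
    have he : HasDerivAt (fun x => Real.exp (-lam * (x - Δ)))
        (Real.exp (-lam * (x - Δ)) * -lam) x := by
      have : HasDerivAt (fun x : ℝ => -lam * (x - Δ)) (-lam) x := by
        simpa using ((hasDerivAt_id x).sub_const Δ).const_mul (-lam)
      simpa [mul_comm] using this.exp
    have hl : HasDerivAt (fun x : ℝ => -(x + 1 / lam)) (-1) x := by
      exact ((hasDerivAt_id x).add_const (1 / lam)).neg
    have := hl.mul he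
    refine this.congr_deriv ?_
    linear_combination (Real.exp (-lam * (x - Δ))) * (mul_inv_cancel₀ hlam.ne')
  have hpos : ∀ x ∈ Set.Ioi Δ, 0 ≤ lam * Real.exp (-lam * (x - Δ)) * x := by
    intro x hx
    have : (0:ℝ) ≤ x := le_trans hΔ (le_of_lt hx)
    positivity
  have htend : Filter.Tendsto F Filter.atTop (nhds 0) := by
    have h1 : Filter.Tendsto (fun x : ℝ => x * Real.exp (-(lam * x))) Filter.atTop (nhds 0) := by
      have := tendsto_rpow_mul_exp_neg_mul_atTop_nhds_zero 1 lam hlam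
      simpa [Real.rpow_one, neg_mul] using this
    have h2 : Filter.Tendsto (fun x : ℝ => Real.exp (-(lam * x))) Filter.atTop (nhds 0) := by
      exact Real.tendsto_exp_neg_atTop_nhds_zero.comp
        (Filter.Tendsto.const_mul_atTop hlam Filter.tendsto_id)
    have hcomb := ((h1.const_mul (Real.exp (lam * Δ))).add
      (h2.const_mul (1 / lam * Real.exp (lam * Δ)))).neg
    simp only [mul_zero, add_zero, neg_zero] at hcomb
    convert hcomb using 2 with x
    rw [hFdef]
    simp only
    rw [show -lam * (x - Δ) = lam * Δ + -(lam * x) by ring, Real.exp_add]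
    ring
  rw [integral_Ioi_of_hasDerivAt_of_nonneg' hderiv hpos htend]
  simp only [hFdef, zero_sub, sub_self, neg_neg, mul_zero, Real.exp_zero, mul_one]


lemma harm_cast (j : ℕ) : (harmonic j : ℝ) = ∑ i ∈ Finset.range j, ((i : ℝ) + 1)⁻¹ := by
  rw [harmonic]
  push_cast
  rfl

lemma harm_diff {n k : ℕ} (hkn : k ≤ n) :
    ∑ i ∈ Finset.Icc 1 k, ((n : ℝ) - (i : ℝ) + 1)⁻¹
      = (harmonic n : ℝ) - (harmonic (n - k) : ℝ) := by
  rw [harm_cast, harm_cast, ← Finset.sum_Ico_eq_sub _ (Nat.sub_le n k)]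
  refine Finset.sum_nbij' (fun a => n - a) (fun b => n - b) ?_ ?_ ?_ ?_ ?_
  · intro a ha
    simp only [Finset.mem_Icc] at ha
    simp only [Finset.mem_Ico]
    omega
  · intro b hb
    simp only [Finset.mem_Ico] at hb
    simp only [Finset.mem_Icc]
    omega
  · intro a ha
    simp only [Finset.mem_Icc] at ha
    show n - (n - a) = a
    omega
  · intro b hb
    simp only [Finset.mem_Ico] at hb
    show n - (n - b) = b
    omega
  · intro a ha
    simp only [Finset.mem_Icc] at ha
    have : ((n - a : ℕ) : ℝ) = (n : ℝ) - (a : ℝ) := by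
      have : a ≤ n := le_trans ha.2 hkn
      push_cast [this]
      ring
    rw [this]


lemma wald {Ω : Type*} [MeasurableSpace Ω] (P : Measure Ω) [IsProbabilityMeasure P]
    (S : Ω → ℕ) (η : ℕ → Ω → ℝ) (μ p : ℝ) (hp0 : 0 < p) (hp1 : p ≤ 1)
    (hSmeas : Measurable S)
    (hSd : ∀ s : ℕ, 1 ≤ s → P {ω | S ω = s} = ENNReal.ofReal ((1 - p) ^ (s - 1) * p))
    (hηmeas : ∀ j, Measurable (η j))
    (hηnn : ∀ j ω, 0 ≤ η j ω)
    (hηint : ∀ j, Integrable (η j) P)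
    (hηmean : ∀ j, ∫ ω, η j ω ∂P = μ)
    (hindep : IndepFun S (fun ω (j : ℕ) => η j ω) P) :
    ∫ ω, ∑ j ∈ Finset.range (S ω), η j ω ∂P = μ * p⁻¹ := by
  have hμ0 : 0 ≤ μ := by
    rw [← hηmean 0]
    exact integral_nonneg (hηnn 0)
  set q : ℝ := 1 - p with hq
  have hq0 : 0 ≤ q := by simp [hq]; linarith
  have hq1 : q < 1 := by simp [hq]; linarith
  have h1q : 1 - q = p := by simp [hq]
  set X : ℕ → Ω → ℝ := fun j ω => if j < S ω then (1 : ℝ) else 0 with hX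
  have hsetmeas : ∀ j : ℕ, MeasurableSet {ω | j < S ω} := by
    intro j
    exact hSmeas (measurableSet_Ioi (a := j))
  have hXmeas : ∀ j, Measurable (X j) := by
    intro j
    exact Measurable.ite (hsetmeas j) measurable_const measurable_const
  -- tail probability
  have htail : ∀ j : ℕ, P {ω | j < S ω} = ENNReal.ofReal (q ^ j) := by
    intro j
    have hset : {ω | j < S ω} = ⋃ d : ℕ, {ω | S ω = j + 1 + d} := by
      ext ω
      simp only [Set.mem_setOf_eq, Set.mem_iUnion]
      constructor
      · intro h; exact ⟨S ω - (j + 1), by omega⟩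
      · rintro ⟨d, hd⟩; omega
    have hdisj : Pairwise (Function.onFun Disjoint fun d : ℕ => {ω | S ω = j + 1 + d}) := by
      intro d d' hdd'
      simp only [Function.onFun]
      rw [Set.disjoint_left]
      intro ω h1 h2
      simp only [Set.mem_setOf_eq] at h1 h2
      omega
    have hmeasd : ∀ d : ℕ, MeasurableSet {ω | S ω = j + 1 + d} := fun d =>
      hSmeas (measurableSet_singleton (j + 1 + d))
    rw [hset, measure_iUnion hdisj hmeasd]
    have heach : ∀ d : ℕ, P {ω | S ω = j + 1 + d} = ENNReal.ofReal ((q ^ j * p) * q ^ d) := by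
      intro d
      rw [hSd (j + 1 + d) (by omega)]
      congr 1
      rw [show j + 1 + d - 1 = j + d by omega, pow_add]
      ring
    rw [tsum_congr heach,
      ← ENNReal.ofReal_tsum_of_nonneg (fun d => by positivity)
        ((summable_geometric_of_lt_one hq0 hq1).mul_left _),
      tsum_mul_left, tsum_geometric_of_lt_one hq0 hq1, h1q]
    congr 1
    field_simp
  -- independence of X j and η j
  have hindepj : ∀ j, IndepFun (X j) (η j) P := by
    intro j
    have h := hindep.comp (φ := fun s : ℕ => if j < s then (1 : ℝ) else 0)
      (ψ := fun v : ℕ → ℝ => v j) measurable_from_top (measurable_pi_apply (X := fun _ : ℕ => ℝ) j)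
    exact h
  -- integral of each term
  have hfint : ∀ j, Integrable (fun ω => X j ω * η j ω) P := by
    intro j
    exact (hηint j).bdd_mul (hXmeas j).aestronglyMeasurable
      (c := 1) (Filter.Eventually.of_forall fun ω => by by_cases h : j < S ω <;> simp [hX, h])
  have hfval : ∀ j, ∫ ω, X j ω * η j ω ∂P = q ^ j * μ := by
    intro j
    have h := (hindepj j).integral_mul_eq_mul_integral (hXmeas j).aestronglyMeasurable
      (hηmeas j).aestronglyMeasurable
    have hXval : ∫ ω, X j ω ∂P = q ^ j := by
      have hXind : X j = Set.indicator {ω | j < S ω} (fun _ => (1 : ℝ)) := by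
        funext ω
        by_cases h' : j < S ω <;> simp [hX, Set.indicator_apply, h']
      rw [hXind]
      rw [show Set.indicator {ω | j < S ω} (fun _ => (1:ℝ)) = Set.indicator {ω | j < S ω} 1 from rfl]
      rw [integral_indicator_one (hsetmeas j), measureReal_def, htail j,
        ENNReal.toReal_ofReal (pow_nonneg hq0 j)]
    calc ∫ ω, X j ω * η j ω ∂P = ∫ ω, (X j * η j) ω ∂P := rfl
      _ = (∫ ω, X j ω ∂P) * ∫ ω, η j ω ∂P := h
      _ = q ^ j * μ := by rw [hXval, hηmean j]
  -- pointwise rewriting as tsum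
  have hpt : ∀ ω, ∑ j ∈ Finset.range (S ω), η j ω = ∑' j, X j ω * η j ω := by
    intro ω
    rw [tsum_eq_sum (s := Finset.range (S ω))
      (fun j hj => by simp [hX, Nat.lt_asymm, Finset.mem_range.not.mp hj])]
    · exact (Finset.sum_congr rfl fun j hj => by
        simp [hX, Finset.mem_range.mp hj]).symm
  have hlint : ∀ j, ∫⁻ ω, ↑‖X j ω * η j ω‖₊ ∂P = ENNReal.ofReal (q ^ j * μ) := by
    intro j
    have hnn : ∀ ω, 0 ≤ X j ω * η j ω := by
      intro ω
      by_cases h : j < S ω <;> simp [hX, h, hηnn j ω]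
    calc ∫⁻ ω, ↑‖X j ω * η j ω‖₊ ∂P
        = ∫⁻ ω, ENNReal.ofReal (X j ω * η j ω) ∂P := by
          apply lintegral_congr
          intro ω
          exact Real.enorm_eq_ofReal (hnn ω)
      _ = ENNReal.ofReal (∫ ω, X j ω * η j ω ∂P) :=
          (ofReal_integral_eq_lintegral_ofReal (hfint j)
            (Filter.Eventually.of_forall hnn)).symm
      _ = ENNReal.ofReal (q ^ j * μ) := by rw [hfval j]
  have hsum : Summable (fun j : ℕ => q ^ j * μ) :=
    (summable_geometric_of_lt_one hq0 hq1).mul_right μ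
  calc ∫ ω, ∑ j ∈ Finset.range (S ω), η j ω ∂P
      = ∫ ω, ∑' j, X j ω * η j ω ∂P := by
        apply integral_congr_ae
        exact Filter.Eventually.of_forall hpt
    _ = ∑' j, ∫ ω, X j ω * η j ω ∂P := by
        apply integral_tsum
          (fun j => ((hXmeas j).mul (hηmeas j)).aestronglyMeasurable)
        change ∑' j, ∫⁻ ω, ↑‖X j ω * η j ω‖₊ ∂P ≠ ⊤
        rw [tsum_congr hlint,
          ← ENNReal.ofReal_tsum_of_nonneg (fun j => by positivity) hsum]
        exact ENNReal.ofReal_ne_top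
    _ = ∑' j, q ^ j * μ := tsum_congr hfval
    _ = (1 - q)⁻¹ * μ := by rw [tsum_mul_right, tsum_geometric_of_lt_one hq0 hq1]
    _ = μ * p⁻¹ := by rw [h1q]; ring


theorem stmt4 {Ω : Type*} [MeasurableSpace Ω] (P : Measure Ω) [IsProbabilityMeasure P]
    (k n : ℕ) (hk : 0 < k) (hn : 0 < n) (hkn : k ≤ n)
    (lam m : ℝ) (hlam : 0 < lam) (hm : 0 < m)
    (C : ℝ) (hC : 0 < C) (hnC : (n : ℝ) / C ≤ 1)
    (μ : ℝ) (hμ : 0 ≤ μ)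
    (t : ℕ → Ω → ℝ) (S : ℕ → Ω → ℕ) (η : ℕ → ℕ → Ω → ℝ)
    -- `t i` has the shifted exponential distribution `SExp(m/k, λ)` and is integrable
    (htmeas : ∀ i, Measurable (t i))
    (htd : ∀ i, 1 ≤ i → i ≤ k → Measure.map (t i) P = sexp (m / k) lam)
    (htint : ∀ i, Integrable (t i) P)
    -- `S i` is geometric with parameter `p_i = (n - i + 1)/C`
    (hSmeas : ∀ i, Measurable (S i))
    (hSd : ∀ i, 1 ≤ i → i ≤ k → ∀ s : ℕ, 1 ≤ s →
      P {ω | S i ω = s} =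
        ENNReal.ofReal ((1 - ((n : ℝ) - (i : ℝ) + 1) / C) ^ (s - 1)
          * (((n : ℝ) - (i : ℝ) + 1) / C)))
    -- the `η i j` are i.i.d. nonnegative integrable with mean `μ`, independent of `S i`
    (hηmeas : ∀ i j, Measurable (η i j))
    (hηnn : ∀ i j ω, 0 ≤ η i j ω)
    (hηint : ∀ i j, Integrable (η i j) P)
    (hηmean : ∀ i j, ∫ ω, η i j ω ∂P = μ)
    (hηiid : ∀ i, iIndepFun (η i) P)
    (hηid : ∀ i j, Measure.map (η i j) P = Measure.map (η i 0) P)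
    (hindep : ∀ i, IndepFun (S i) (fun ω (j : ℕ) => η i j ω) P)
    -- all summands are integrable
    (hsumint : ∀ i, Integrable (fun ω => ∑ j ∈ Finset.range (S i ω), η i j ω) P) :
    ∫ ω, ∑ i ∈ Finset.Icc 1 k, (t i ω + ∑ j ∈ Finset.range (S i ω), η i j ω) ∂P
      = (k : ℝ) / lam + m + C * μ * (H n - H (n - k)) := by
  have hksucc : (k:ℝ) ≠ 0 := Nat.cast_ne_zero.mpr hk.ne'
  have hstep : ∀ i ∈ Finset.Icc 1 k,
      ∫ ω, (t i ω + ∑ j ∈ Finset.range (S i ω), η i j ω) ∂P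
        = (m / k + 1 / lam) + (μ * C) * ((n : ℝ) - (i : ℝ) + 1)⁻¹ := by
    intro i hi
    rw [Finset.mem_Icc] at hi
    rw [integral_add (htint i) (hsumint i)]
    have hti : ∫ ω, t i ω ∂P = m / k + 1 / lam := by
      have h1 : ∫ ω, t i ω ∂P = ∫ x, x ∂(Measure.map (t i) P) :=
        (integral_map (htmeas i).aemeasurable aestronglyMeasurable_id).symm
      rw [h1, htd i hi.1 hi.2, sexp_mean (by positivity) hlam]
    have hin : (i : ℝ) ≤ (n : ℝ) := Nat.cast_le.mpr (le_trans hi.2 hkn)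
    have hi1 : (1 : ℝ) ≤ (i : ℝ) := by exact_mod_cast hi.1
    have hnum : (0 : ℝ) < (n : ℝ) - (i : ℝ) + 1 := by linarith
    have hp0 : 0 < ((n : ℝ) - (i : ℝ) + 1) / C := div_pos hnum hC
    have hp1 : ((n : ℝ) - (i : ℝ) + 1) / C ≤ 1 :=
      le_trans ((div_le_div_iff_of_pos_right hC).mpr (by linarith)) hnC
    have hwi := wald P (S i) (η i) μ (((n : ℝ) - (i : ℝ) + 1) / C) hp0 hp1 (hSmeas i)
      (fun s hs => hSd i hi.1 hi.2 s hs) (hηmeas i) (hηnn i) (hηint i) (hηmean i) (hindep i)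
    rw [hti, hwi, inv_div]
    ring
  rw [integral_finset_sum (Finset.Icc 1 k)
      (f := fun i ω => t i ω + ∑ j ∈ Finset.range (S i ω), η i j ω)
      (fun i _ => (htint i).add (hsumint i)),
    Finset.sum_congr rfl hstep, Finset.sum_add_distrib, ← Finset.mul_sum, harm_diff hkn,
    Finset.sum_const, Nat.card_Icc]
  simp only [Nat.add_sub_cancel, nsmul_eq_mul, H]
  field_simp
  ring
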